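/- Fix α > 0 and a real sequence {γ_n}. Define the polynomials Q_k(x) = ∑_{j=0}^{⌊k/2⌋} ((-α)^j / (j!(k-2j)!)) g*_{k-j}(-1) H^{(α)}_{k-2j}(x), where g*_n(-1) = ∑_{k=0}^{n} C(n,k) γ_k (-1)^{n-k}. Then for every n ≥ 0, ∑_{k=0}^{n} Q_k(x) · (d/dx)^k H^{(α)}_n(x) = γ_n H^{(α)}_n(x). -/

import Mathlib

open Polynomial Finset

noncomputable def genHermite (α : ℝ) (n : ℕ) : Polynomial ℝ :=
  ∑ j ∈ Finset.range (n / 2 + 1),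
    C ((n.factorial : ℝ) * (-α) ^ j / (2 ^ j * j.factorial * (n - 2 * j).factorial)) *
      X ^ (n - 2 * j)

noncomputable def gh2 (α : ℝ) (n : ℕ) : Polynomial ℝ :=
  ∑ j ∈ Finset.range (n + 1),
    C ((n.descFactorial (2*j) : ℝ) * (-α) ^ j / (2 ^ j * j.factorial)) * X ^ (n - 2*j)

lemma genHermite_eq (α : ℝ) (n : ℕ) : genHermite α n = gh2 α n := by
  rw [genHermite, gh2]
  rw [show (range (n/2+1)).sum
      (fun j => C ((n.factorial : ℝ) * (-α) ^ j / (2 ^ j * j.factorial * (n - 2 * j).factorial)) *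
      X ^ (n - 2 * j)) = (range (n/2+1)).sum
      (fun j => C ((n.descFactorial (2*j) : ℝ) * (-α) ^ j / (2 ^ j * j.factorial)) * X ^ (n - 2*j))
      from ?_]
  · apply Finset.sum_subset
    · apply range_subset_range.2; omega
    · intro j _ hj
      have : n < 2*j := by simp at hj ⊢; omega
      rw [Nat.descFactorial_eq_zero_iff_lt.2 this]
      simp
  · apply Finset.sum_congr rfl
    intro j hj
    have h2j : 2*j ≤ n := by simp at hj; omega
    congr 1
    congr 1
    have hfac : ((n - 2*j).factorial : ℝ) * (n.descFactorial (2*j) : ℝ) = n.factorial := by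
      rw [← Nat.cast_mul, Nat.factorial_mul_descFactorial h2j]
    have h1 : ((n - 2*j).factorial : ℝ) ≠ 0 := Nat.cast_ne_zero.2 (Nat.factorial_ne_zero _)
    have h2 : ((j).factorial : ℝ) ≠ 0 := Nat.cast_ne_zero.2 (Nat.factorial_ne_zero _)
    have h3 : (2:ℝ)^j ≠ 0 := pow_ne_zero _ two_ne_zero
    field_simp
    rw [← hfac]; ring

lemma descF_G (n k : ℕ) : (n+1).descFactorial k = n.descFactorial k + k * n.descFactorial (k-1) := by
  cases k with
  | zero => simp
  | succ k =>
    rw [Nat.succ_descFactorial_succ, Nat.descFactorial_succ, Nat.add_sub_cancel]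
    by_cases h : k ≤ n
    · have : n + 1 = (n - k) + (k+1) := by omega
      rw [this]; ring
    · rw [Nat.descFactorial_eq_zero_iff_lt.2 (show n < k by omega)]
      simp

lemma descF_mul (n j : ℕ) : (n - 2*j) * n.descFactorial (2*j) = n * (n-1).descFactorial (2*j) := by
  have h1 : n.descFactorial (2*j+1) = (n - 2*j) * n.descFactorial (2*j) := Nat.descFactorial_succ n (2*j)
  cases n with
  | zero => simp [Nat.zero_descFactorial_succ] at h1 ⊢
  | succ n =>
    rw [← h1, Nat.succ_descFactorial_succ, Nat.succ_sub_one]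

lemma gh2_zero (α : ℝ) : gh2 α 0 = 1 := by
  simp [gh2]

lemma genHermite_zero (α : ℝ) : genHermite α 0 = 1 := by
  rw [genHermite_eq, gh2_zero]

lemma gh2_deriv (α : ℝ) (n : ℕ) :
    derivative (gh2 α n) = (n : ℝ) • gh2 α (n-1) := by
  rw [gh2, gh2, derivative_sum, Finset.smul_sum]
  cases n with
  | zero => simp
  | succ n =>
    rw [Nat.succ_sub_one]
    rw [Finset.sum_range_succ]
    have hlast : derivative (C (((n+1).descFactorial (2*(n+1)) : ℝ) * (-α) ^ (n+1) / (2 ^ (n+1) * (n+1).factorial)) * X ^ (n+1 - 2*(n+1))) = 0 := by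
      rw [Nat.descFactorial_eq_zero_iff_lt.2 (by omega)]
      simp
    rw [hlast, add_zero]
    apply Finset.sum_congr rfl
    intro j hj
    have hjn : j ≤ n := by simp at hj; omega
    rw [derivative_C_mul_X_pow]
    rw [show n + 1 - 2*j - 1 = n - 2*j by omega]
    rw [smul_eq_C_mul, ← mul_assoc, ← C_mul]
    congr 1
    apply congrArg C
    have key : ((n + 1 - 2*j : ℕ) : ℝ) * ((n+1).descFactorial (2*j) : ℝ)
        = ((n+1 : ℕ) : ℝ) * ((n.descFactorial (2*j)) : ℝ) := by
      have := descF_mul (n+1) j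
      rw [show n + 1 - 1 = n from rfl] at this
      exact_mod_cast congrArg (Nat.cast (R := ℝ)) this
    have h2 : ((j).factorial : ℝ) ≠ 0 := Nat.cast_ne_zero.2 (Nat.factorial_ne_zero _)
    have h3 : (2:ℝ)^j ≠ 0 := pow_ne_zero _ two_ne_zero
    field_simp
    push_cast at key ⊢
    linear_combination ((-α)^j) * key

lemma gh2_X_mul (α : ℝ) (n : ℕ) :
    X * gh2 α n = gh2 α (n+1) + (α*(n:ℝ)) • gh2 α (n-1) := by
  cases n with
  | zero =>
    simp [gh2, Finset.sum_range_succ]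
  | succ n =>
    rw [Nat.succ_sub_one]
    have hL : (X:Polynomial ℝ) * gh2 α (n+1) = ∑ j ∈ range (n+2),
        C (((n+1).descFactorial (2*j):ℝ) * (-α)^j/(2^j * j.factorial)) * X ^ (n+2 - 2*j) := by
      rw [gh2, Finset.mul_sum]
      apply Finset.sum_congr rfl
      intro j hj
      by_cases h2 : 2*j ≤ n+1
      · rw [show n+2-2*j = (n+1-2*j)+1 from by omega, pow_succ]; ring
      · rw [Nat.descFactorial_eq_zero_iff_lt.2 (show n+1 < 2*j from by omega)]; simp
    have hR2 : (α*((n+1:ℕ):ℝ)) • gh2 α n = ∑ j ∈ range (n+1),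
        C ((α*((n+1:ℕ):ℝ)) * ((n.descFactorial (2*j):ℝ) * (-α)^j/(2^j * j.factorial))) * X ^ (n - 2*j) := by
      rw [gh2, Finset.smul_sum]
      apply Finset.sum_congr rfl
      intro j hj
      rw [smul_eq_C_mul, ← mul_assoc, ← C_mul]
    rw [hL, hR2, gh2]
    rw [Finset.sum_range_succ' _ (n+1), Finset.sum_range_succ' _ (n+2), Finset.sum_range_succ _ (n+1)]
    have hT : C (((n+2).descFactorial (2*(n+2)):ℝ) * (-α)^(n+2)/(2^(n+2) * (n+2).factorial)) * X ^ (n+2 - 2*(n+2)) = 0 := by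
      rw [Nat.descFactorial_eq_zero_iff_lt.2 (show n+2 < 2*(n+2) from by omega)]; simp
    rw [hT, add_zero]
    have hterm : ∀ j ∈ range (n+1),
        C (((n+1).descFactorial (2*(j+1)):ℝ) * (-α)^(j+1)/(2^(j+1) * (j+1).factorial)) * X ^ (n+2 - 2*(j+1))
        = C (((n+1+1).descFactorial (2*(j+1)):ℝ) * (-α)^(j+1)/(2^(j+1) * (j+1).factorial)) * X ^ (n+1+1 - 2*(j+1))
          + C ((α*((n+1:ℕ):ℝ)) * ((n.descFactorial (2*j):ℝ) * (-α)^j/(2^j * j.factorial))) * X ^ (n - 2*j) := by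
      intro j hj
      have hjn : j ≤ n := by simp at hj; omega
      rw [show n+2-2*(j+1) = n-2*j from by omega]
      rw [← add_mul, ← C_add]
      congr 1
      apply congrArg C
      have h1 := descF_G (n+1) (2*(j+1))
      rw [show 2*(j+1)-1 = 2*j+1 from by omega, Nat.succ_descFactorial_succ n (2*j)] at h1
      have key : (((n+1+1).descFactorial (2*(j+1)) : ℕ) : ℝ)
          = (((n+1).descFactorial (2*(j+1)) : ℕ) : ℝ)
            + (2*((j:ℝ)+1)) * ((((n+1):ℕ):ℝ) * ((n.descFactorial (2*j) : ℕ) : ℝ)) := by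
        exact_mod_cast h1
      rw [key]
      have h2 : ((j+1).factorial : ℝ) ≠ 0 := Nat.cast_ne_zero.2 (Nat.factorial_ne_zero _)
      have h2' : ((j).factorial : ℝ) ≠ 0 := Nat.cast_ne_zero.2 (Nat.factorial_ne_zero _)
      have h3 : (2:ℝ)^(j+1) ≠ 0 := pow_ne_zero _ two_ne_zero
      have h3' : (2:ℝ)^j ≠ 0 := pow_ne_zero _ two_ne_zero
      rw [Nat.factorial_succ]
      push_cast
      field_simp
      ring
    rw [Finset.sum_congr rfl hterm, Finset.sum_add_distrib]
    simp
    ring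

lemma H_deriv (α : ℝ) (n : ℕ) :
    derivative (genHermite α n) = (n:ℝ) • genHermite α (n-1) := by
  rw [genHermite_eq, genHermite_eq, gh2_deriv]

lemma H_X_mul (α : ℝ) (n : ℕ) :
    X * genHermite α n = genHermite α (n+1) + (α*(n:ℝ)) • genHermite α (n-1) := by
  rw [genHermite_eq, genHermite_eq, genHermite_eq, gh2_X_mul]

lemma H_create (α : ℝ) (n : ℕ) :
    X * genHermite α n - α • derivative (genHermite α n) = genHermite α (n+1) := by
  rw [H_deriv, H_X_mul, smul_smul]
  ring_nf

lemma H_create_mul (α : ℝ) (a b : ℕ) :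
    X * (genHermite α a * genHermite α b) - α • derivative (genHermite α a * genHermite α b)
      = genHermite α (a+1) * genHermite α b
        - (α*(b:ℝ)) • (genHermite α a * genHermite α (b-1)) := by
  rw [derivative_mul, H_deriv, H_deriv, ← mul_assoc, H_X_mul]
  simp only [add_mul, smul_mul_assoc, mul_smul_comm, smul_add, smul_smul]
  module

lemma keyD (α : ℝ) (q : ℕ) : ∀ p : ℕ, genHermite α (p+q) =
    ∑ i ∈ Finset.range (q+1),
      (((-α)^i * i.factorial * p.choose i * q.choose i : ℝ)) •
        (genHermite α (p-i) * genHermite α (q-i)) := by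
  intro p
  induction p with
  | zero =>
    rw [Finset.sum_eq_single_of_mem 0 (Finset.mem_range.2 (by omega))]
    · simp [genHermite_zero]
    · intro i _ hi
      obtain ⟨i', rfl⟩ := Nat.exists_eq_succ_of_ne_zero hi
      simp [Nat.choose_zero_succ]
  | succ p IH =>
    have opIH := congrArg (fun f : Polynomial ℝ => X * f - α • derivative f) IH
    rw [H_create] at opIH
    rw [show p + q + 1 = p + 1 + q from by omega] at opIH
    rw [opIH, derivative_sum, Finset.mul_sum, Finset.smul_sum, ← Finset.sum_sub_distrib]
    have step1 : ∀ i ∈ Finset.range (q+1),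
        X * (((-α)^i * i.factorial * p.choose i * q.choose i : ℝ) •
            (genHermite α (p-i) * genHermite α (q-i)))
          - α • derivative (((-α)^i * i.factorial * p.choose i * q.choose i : ℝ) •
            (genHermite α (p-i) * genHermite α (q-i)))
        = ((-α)^i * i.factorial * p.choose i * q.choose i : ℝ) •
            (genHermite α ((p-i)+1) * genHermite α (q-i))
          - (((-α)^i * i.factorial * p.choose i * q.choose i : ℝ) * (α*((q-i:ℕ):ℝ))) •
            (genHermite α (p-i) * genHermite α ((q-i)-1)) := by
      intro i hi
      rw [derivative_smul, mul_smul_comm, smul_comm α, ← smul_sub, H_create_mul, smul_sub,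
        smul_smul]
    rw [Finset.sum_congr rfl step1, Finset.sum_sub_distrib]
    rw [Finset.sum_range_succ'
      (fun i => ((-α)^i * i.factorial * (p+1).choose i * q.choose i : ℝ) •
            (genHermite α (p+1-i) * genHermite α (q-i))) q, Finset.sum_range_succ'
      (fun i => ((-α)^i * i.factorial * p.choose i * q.choose i : ℝ) •
            (genHermite α ((p-i)+1) * genHermite α (q-i))) q,
      Finset.sum_range_succ
      (fun i => (((-α)^i * i.factorial * p.choose i * q.choose i : ℝ) * (α*((q-i:ℕ):ℝ))) •
            (genHermite α (p-i) * genHermite α ((q-i)-1))) q]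
    have hS2q : (((-α)^q * q.factorial * p.choose q * q.choose q : ℝ) * (α*((q-q:ℕ):ℝ))) •
            (genHermite α (p-q) * genHermite α ((q-q)-1)) = 0 := by
      simp [Nat.sub_self]
    rw [hS2q, add_zero]
    have hmain : ∀ i ∈ Finset.range q,
        ((-α)^(i+1) * (i+1).factorial * (p+1).choose (i+1) * q.choose (i+1) : ℝ) •
            (genHermite α (p+1-(i+1)) * genHermite α (q-(i+1)))
        = ((-α)^(i+1) * (i+1).factorial * p.choose (i+1) * q.choose (i+1) : ℝ) •
            (genHermite α ((p-(i+1))+1) * genHermite α (q-(i+1)))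
          - (((-α)^i * i.factorial * p.choose i * q.choose i : ℝ) * (α*((q-i:ℕ):ℝ))) •
            (genHermite α (p-i) * genHermite α ((q-i)-1)) := by
      intro i hi
      have hiq : i < q := Finset.mem_range.1 hi
      have f2 : ((q.choose (i+1)):ℝ) * ((i:ℝ)+1) = (q.choose i : ℝ) * ((q-i:ℕ):ℝ) := by
        exact_mod_cast Nat.choose_succ_right_eq q i
      have f1 : (((p+1).choose (i+1)):ℝ) = (p.choose i : ℝ) + (p.choose (i+1) : ℝ) := by
        exact_mod_cast Nat.choose_succ_succ' p i
      rw [show p+1-(i+1) = p-i from by omega, show q-(i+1) = (q-i)-1 from by omega]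
      by_cases hip : i + 1 ≤ p
      · rw [show (p-(i+1))+1 = p-i from by omega]
        rw [← sub_smul]
        congr 1
        rw [f1, Nat.factorial_succ]
        push_cast
        linear_combination ((-α)^(i+1) * (i.factorial:ℝ) * (p.choose i:ℝ)) * f2
      · have hz : ((-α)^(i+1) * (i+1).factorial * p.choose (i+1) * q.choose (i+1) : ℝ) = 0 := by
          rw [Nat.choose_eq_zero_of_lt (show p < i+1 from by omega)]
          simp
        rw [hz, zero_smul, zero_sub, ← neg_smul]
        congr 1
        rw [f1, Nat.choose_eq_zero_of_lt (show p < i+1 from by omega), Nat.factorial_succ]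
        push_cast
        linear_combination ((-α)^(i+1) * (i.factorial:ℝ) * (p.choose i:ℝ)) * f2
    rw [Finset.sum_congr rfl hmain, Finset.sum_sub_distrib]
    simp only [Nat.sub_zero, Nat.choose_zero_right, pow_zero, Nat.factorial_zero]
    ring

lemma descF_succ' (n k : ℕ) : n.descFactorial (k+1) = n * (n-1).descFactorial k := by
  cases n with
  | zero => simp [Nat.zero_descFactorial_succ]
  | succ n => rw [Nat.succ_descFactorial_succ, Nat.succ_sub_one]

lemma H_iter (α : ℝ) (k : ℕ) : ∀ n : ℕ, derivative^[k] (genHermite α n)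
    = (n.descFactorial k : ℝ) • genHermite α (n-k) := by
  induction k with
  | zero => intro n; simp
  | succ k IH =>
    intro n
    rw [Function.iterate_succ_apply, H_deriv, iterate_derivative_smul, IH (n-1), smul_smul,
      show n - 1 - k = n - (k+1) from by omega]
    congr 1
    rw [descF_succ' n k]
    push_cast
    ring

lemma choose_mul_choose_real (n k t : ℕ) :
    ((n.choose (k+t) : ℝ)) * ((k+t).choose k : ℝ) = (n.choose k : ℝ) * ((n-k).choose t : ℝ) := by
  have h1 := Nat.descFactorial_mul_descFactorial (show k ≤ k+t from Nat.le_add_right k t) (n := n)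
  rw [Nat.add_sub_cancel_left] at h1
  have h2 := Nat.choose_mul_factorial_mul_factorial (Nat.le_add_right k t)
  rw [Nat.add_sub_cancel_left] at h2
  rw [Nat.descFactorial_eq_factorial_mul_choose, Nat.descFactorial_eq_factorial_mul_choose,
    Nat.descFactorial_eq_factorial_mul_choose] at h1
  have h1' : ((t.factorial : ℝ) * ((n-k).choose t : ℝ)) * ((k.factorial : ℝ) * (n.choose k : ℝ))
      = ((k+t).factorial : ℝ) * (n.choose (k+t) : ℝ) := by exact_mod_cast h1
  have h2' : ((k+t).choose k : ℝ) * (k.factorial : ℝ) * (t.factorial : ℝ)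
      = ((k+t).factorial : ℝ) := by exact_mod_cast h2
  have hk : (k.factorial : ℝ) ≠ 0 := Nat.cast_ne_zero.2 (Nat.factorial_ne_zero _)
  have ht : (t.factorial : ℝ) ≠ 0 := Nat.cast_ne_zero.2 (Nat.factorial_ne_zero _)
  apply mul_left_cancel₀ (mul_ne_zero hk ht)
  linear_combination ((n.choose (k+t) : ℝ)) * h2' - h1'

lemma alt_real (s : ℕ) :
    ∑ t ∈ Finset.range (s+1), (-1:ℝ)^t * (s.choose t : ℝ) = if s = 0 then 1 else 0 := by
  have h := congrArg (fun z : ℤ => (z : ℝ)) (Int.alternating_sum_range_choose (n := s))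
  push_cast at h
  rw [h]

noncomputable def gstar (γ : ℕ → ℝ) (n : ℕ) : ℝ :=
  ∑ k ∈ Finset.range (n + 1), (n.choose k : ℝ) * γ k * (-1) ^ (n - k)

lemma inversion (γ : ℕ → ℝ) (n : ℕ) :
    ∑ m ∈ Finset.range (n+1), (n.choose m : ℝ) * gstar γ m = γ n := by
  have hext : ∀ m ∈ Finset.range (n+1), (n.choose m : ℝ) * gstar γ m
      = ∑ k ∈ Finset.range (n+1), (n.choose m : ℝ) * ((m.choose k : ℝ) * γ k * (-1)^(m-k)) := by
    intro m hm
    rw [gstar, Finset.mul_sum]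
    apply Finset.sum_subset (Finset.range_subset_range.2 (by simp at hm; omega))
    intro k _ hk
    rw [Nat.choose_eq_zero_of_lt (show m < k from by simp at hk; omega)]
    simp
  rw [Finset.sum_congr rfl hext, Finset.sum_comm]
  have hinner : ∀ k ∈ Finset.range (n+1),
      ∑ m ∈ Finset.range (n+1), (n.choose m : ℝ) * ((m.choose k : ℝ) * γ k * (-1)^(m-k))
      = if k = n then γ n else 0 := by
    intro k hk
    have hkn : k ≤ n := by simp at hk; omega
    have hrestrict : ∑ m ∈ Finset.Ico k (n+1), (n.choose m : ℝ) * ((m.choose k : ℝ) * γ k * (-1)^(m-k))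
        = ∑ m ∈ Finset.range (n+1), (n.choose m : ℝ) * ((m.choose k : ℝ) * γ k * (-1)^(m-k)) := by
      apply Finset.sum_subset
      · intro x hx; simp at hx ⊢; omega
      · intro m hm1 hm
        rw [Nat.choose_eq_zero_of_lt (show m < k from by simp at hm1 hm; omega)]
        simp
    rw [← hrestrict, Finset.sum_Ico_eq_sum_range, show n+1-k = (n-k)+1 from by omega]
    have hterm : ∀ t ∈ Finset.range ((n-k)+1),
        (n.choose (k+t) : ℝ) * (((k+t).choose k : ℝ) * γ k * (-1)^(k+t-k))
        = ((n.choose k : ℝ) * γ k) * ((-1)^t * ((n-k).choose t : ℝ)) := by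
      intro t _
      rw [show k+t-k = t from by omega]
      linear_combination (γ k * (-1:ℝ)^t) * choose_mul_choose_real n k t
    rw [Finset.sum_congr rfl hterm, ← Finset.mul_sum, alt_real]
    by_cases hk2 : k = n
    · subst hk2
      simp
    · rw [if_neg (show ¬(n-k = 0) from by omega), if_neg hk2, mul_zero]
  rw [Finset.sum_congr rfl hinner]
  simp

noncomputable def Qpoly (α : ℝ) (γ : ℕ → ℝ) (k : ℕ) : Polynomial ℝ :=
  ∑ j ∈ Finset.range (k / 2 + 1),
    C ((-α) ^ j / (j.factorial * (k - 2 * j).factorial) * gstar γ (k - j)) *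
      genHermite α (k - 2 * j)

theorem stmt_10 (α : ℝ) (hα : 0 < α) (γ : ℕ → ℝ) (n : ℕ) :
    ∑ k ∈ Finset.range (n + 1), Qpoly α γ k * (derivative^[k] (genHermite α n)) =
      γ n • genHermite α n := by
  have h1 : ∀ k ∈ Finset.range (n+1), Qpoly α γ k * (derivative^[k] (genHermite α n))
      = ∑ j ∈ Finset.range (k/2+1),
          (((-α)^j / (j.factorial * (k-2*j).factorial) * gstar γ (k-j)) * (n.descFactorial k : ℝ)) •
            (genHermite α (k-2*j) * genHermite α (n-k)) := by
    intro k hk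
    rw [H_iter, Qpoly, Finset.sum_mul]
    apply Finset.sum_congr rfl
    intro j hj
    rw [mul_smul_comm, mul_assoc, ← smul_eq_C_mul, smul_smul,
      mul_comm ((n.descFactorial k : ℝ))]
  rw [Finset.sum_congr rfl h1, Finset.sum_sigma']
  have h2 : ∑ x ∈ (Finset.range (n+1)).sigma (fun k => Finset.range (k/2+1)),
        (((-α)^x.2 / (x.2.factorial * (x.1-2*x.2).factorial) * gstar γ (x.1-x.2))
          * (n.descFactorial x.1 : ℝ)) •
            (genHermite α (x.1-2*x.2) * genHermite α (n-x.1))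
      = ∑ x ∈ ((Finset.range (n+1)).sigma (fun m => Finset.range (m+1))).filter
          (fun s => s.1 + s.2 ≤ n),
        (((-α)^x.2 / (x.2.factorial * (x.1-x.2).factorial) * gstar γ x.1)
          * (n.descFactorial (x.1+x.2) : ℝ)) •
            (genHermite α (x.1-x.2) * genHermite α (n-(x.1+x.2))) := by
    apply Finset.sum_nbij' (fun s => (⟨s.1 - s.2, s.2⟩ : Σ _ : ℕ, ℕ))
      (fun s => (⟨s.1 + s.2, s.2⟩ : Σ _ : ℕ, ℕ))
    · intro a ha
      simp [Finset.mem_sigma, Finset.mem_filter, Finset.mem_range] at ha ⊢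
      omega
    · intro a ha
      simp [Finset.mem_sigma, Finset.mem_filter, Finset.mem_range] at ha ⊢
      omega
    · intro a ha
      obtain ⟨k, j⟩ := a
      simp only [Finset.mem_sigma, Finset.mem_range] at ha
      have hkj : k - j + j = k := by omega
      simp [hkj]
    · intro a ha
      obtain ⟨k, j⟩ := a
      simp only [Finset.mem_filter, Finset.mem_sigma, Finset.mem_range] at ha
      have hkj : k + j - j = k := by omega
      simp [hkj]
    · intro a ha
      obtain ⟨k, j⟩ := a
      simp only [Finset.mem_sigma, Finset.mem_range] at ha
      dsimp only
      rw [show k-j-j = k-2*j from by omega, show k-j+j = k from by omega]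
  rw [h2]
  rw [Finset.sum_filter_of_ne (by
    intro x hx hne
    by_contra hc
    apply hne
    rw [Nat.descFactorial_eq_zero_iff_lt.2 (show n < x.1+x.2 from by omega)]
    simp)]
  rw [Finset.sum_sigma]
  have h4 : ∀ m ∈ Finset.range (n+1),
      (∑ i ∈ Finset.range (m+1),
        (((-α)^i / (i.factorial * (m-i).factorial) * gstar γ m)
          * (n.descFactorial (m+i) : ℝ)) •
            (genHermite α (m-i) * genHermite α (n-(m+i))))
      = (gstar γ m * (n.choose m : ℝ)) • genHermite α n := by
    intro m hm
    have hmn : m ≤ n := by simp at hm; omega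
    have hD := keyD α m (n-m)
    rw [show n-m+m = n from by omega] at hD
    rw [hD, Finset.smul_sum]
    apply Finset.sum_congr rfl
    intro i hi
    have him : i ≤ m := by simp at hi; omega
    rw [smul_smul, show n-(m+i) = n-m-i from by omega,
      mul_comm (genHermite α (m-i)) (genHermite α (n-m-i))]
    congr 1
    have e1 : m.choose i * i.factorial * (m-i).factorial = m.factorial :=
      Nat.choose_mul_factorial_mul_factorial him
    have e4 := Nat.descFactorial_mul_descFactorial (show m ≤ m+i from Nat.le_add_right m i) (n := n)
    rw [Nat.add_sub_cancel_left] at e4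
    have NI : n.descFactorial (m+i)
        = (i.factorial * (m-i).factorial) * (n.choose m * (i.factorial * ((n-m).choose i * m.choose i))) := by
      rw [← e4, Nat.descFactorial_eq_factorial_mul_choose,
        Nat.descFactorial_eq_factorial_mul_choose, ← e1]
      ring
    have NIc : ((n.descFactorial (m+i) : ℕ) : ℝ)
        = ((i.factorial : ℝ) * ((m-i).factorial : ℝ)) * ((n.choose m : ℝ)
            * ((i.factorial : ℝ) * (((n-m).choose i : ℝ) * (m.choose i : ℝ)))) := by
      exact_mod_cast NI
    rw [NIc]
    have hi1 : ((i).factorial : ℝ) ≠ 0 := Nat.cast_ne_zero.2 (Nat.factorial_ne_zero _)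
    have hi2 : ((m-i).factorial : ℝ) ≠ 0 := Nat.cast_ne_zero.2 (Nat.factorial_ne_zero _)
    field_simp
  rw [Finset.sum_congr rfl h4, ← Finset.sum_smul]
  congr 1
  rw [← inversion γ n]
  apply Finset.sum_congr rfl
  intro m _
  ring
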